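/- Fix M > 0. Let μ and ν be Borel probability measures on [0,M], and let x₁, x₂ be prices with 0 ≤ x₁ < x₂ ≤ M. Then R(x₂,ν) − R(x₁,μ) ≤ (x₂ − x₁) + M·d_W(μ,ν)/(x₂ − x₁). -/

import Mathlib

open MeasureTheory

noncomputable section

/-- Cumulative distribution function `F(t) = μ([0,t])`. -/
def cdf0 (μ : Measure ℝ) (t : ℝ) : ℝ := (μ (Set.Icc 0 t)).toReal

/-- Wasserstein-1 distance between measures on `[0,M]`: `∫₀^M |F(t) - H(t)| dt`. -/
def wassDist (M : ℝ) (μ ν : Measure ℝ) : ℝ :=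
  ∫ t in Set.Icc (0:ℝ) M, |cdf0 μ t - cdf0 ν t|

/-- Expected pricing revenue `R(x,μ) = x · μ{ξ : ξ ≥ x}`. -/
def rev (x : ℝ) (μ : Measure ℝ) : ℝ := x * (μ {ξ : ℝ | x ≤ ξ}).toReal

lemma cdf0_mono (μ : Measure ℝ) [IsProbabilityMeasure μ] : Monotone (cdf0 μ) := by
  intro s t hst
  exact ENNReal.toReal_mono (measure_ne_top μ _)
    (measure_mono (Set.Icc_subset_Icc_right hst))

lemma cdf0_nonneg (μ : Measure ℝ) (t : ℝ) : 0 ≤ cdf0 μ t := ENNReal.toReal_nonneg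

lemma cdf0_le_one (μ : Measure ℝ) [IsProbabilityMeasure μ] (t : ℝ) : cdf0 μ t ≤ 1 := by
  have := prob_le_one (μ := μ) (s := Set.Icc 0 t)
  simpa [cdf0] using ENNReal.toReal_mono ENNReal.one_ne_top this

/-- Proposition 4 (pricing): for prices `x₁ < x₂`,
`R(x₂,ν) - R(x₁,μ) ≤ (x₂ - x₁) + M·d_W(μ,ν)/(x₂ - x₁)`. -/
theorem pricing_revenue_difference
    (M : ℝ) (hM : 0 < M)
    (μ ν : Measure ℝ) [IsProbabilityMeasure μ] [IsProbabilityMeasure ν]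
    (hμ : μ (Set.Icc 0 M) = 1) (hν : ν (Set.Icc 0 M) = 1)
    (x₁ x₂ : ℝ) (hx₁ : 0 ≤ x₁) (h12 : x₁ < x₂) (hx₂ : x₂ ≤ M) :
    rev x₂ ν - rev x₁ μ ≤ (x₂ - x₁) + M * wassDist M μ ν / (x₂ - x₁) := by
  set a := (ν {ξ : ℝ | x₂ ≤ ξ}).toReal with ha
  set b := (μ {ξ : ℝ | x₁ ≤ ξ}).toReal with hb
  have hd : 0 < x₂ - x₁ := sub_pos.mpr h12
  have hx₁M : x₁ ≤ M := le_trans h12.le hx₂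
  -- key pointwise bound
  have key : ∀ t ∈ Set.Ico x₁ x₂, a - b ≤ cdf0 μ t - cdf0 ν t := by
    intro t ht
    have ht1 : x₁ ≤ t := ht.1
    have ht2 : t < x₂ := ht.2
    -- a ≤ 1 - cdf0 ν t
    have hA : a + cdf0 ν t ≤ 1 := by
      have hdisj : Disjoint (Set.Icc (0:ℝ) t) {ξ : ℝ | x₂ ≤ ξ} := by
        rw [Set.disjoint_left]
        intro ξ hξ hξ2
        exact absurd (le_trans hξ2 hξ.2) (not_le.mpr ht2)
      have hmeas : MeasurableSet {ξ : ℝ | x₂ ≤ ξ} := measurableSet_Ici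
      have hsum : ν (Set.Icc 0 t) + ν {ξ : ℝ | x₂ ≤ ξ} ≤ 1 := by
        rw [← measure_union hdisj hmeas]
        exact prob_le_one
      have := ENNReal.toReal_mono ENNReal.one_ne_top hsum
      rwa [ENNReal.toReal_add (measure_ne_top ν _) (measure_ne_top ν _),
        ENNReal.toReal_one, add_comm] at this
    -- 1 ≤ cdf0 μ t + b
    have hB : 1 ≤ cdf0 μ t + b := by
      have hsub : Set.Icc (0:ℝ) M ⊆ Set.Icc 0 t ∪ {ξ : ℝ | x₁ ≤ ξ} := by
        intro ξ hξ
        rcases le_or_gt ξ t with h | h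
        · exact Or.inl ⟨hξ.1, h⟩
        · exact Or.inr (le_trans ht1 h.le)
      have hsum : (1 : ENNReal) ≤ μ (Set.Icc 0 t) + μ {ξ : ℝ | x₁ ≤ ξ} := by
        calc (1 : ENNReal) = μ (Set.Icc 0 M) := hμ.symm
          _ ≤ μ (Set.Icc 0 t ∪ {ξ : ℝ | x₁ ≤ ξ}) := measure_mono hsub
          _ ≤ _ := measure_union_le _ _
      have hne : μ (Set.Icc 0 t) + μ {ξ : ℝ | x₁ ≤ ξ} ≠ ⊤ :=
        ENNReal.add_ne_top.mpr ⟨measure_ne_top μ _, measure_ne_top μ _⟩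
      have := ENNReal.toReal_mono hne hsum
      rwa [ENNReal.toReal_add (measure_ne_top μ _) (measure_ne_top μ _),
        ENNReal.toReal_one] at this
    linarith
  -- pointwise bound for the integrand
  have key2 : ∀ t ∈ Set.Ico x₁ x₂,
      x₁ * (a - b) ≤ M * |cdf0 μ t - cdf0 ν t| := by
    intro t ht
    rcases le_or_gt (a - b) 0 with h | h
    · have : x₁ * (a - b) ≤ 0 := mul_nonpos_of_nonneg_of_nonpos hx₁ h
      exact le_trans this (mul_nonneg hM.le (abs_nonneg _))
    · calc x₁ * (a - b) ≤ M * (a - b) := mul_le_mul_of_nonneg_right hx₁M h.le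
        _ ≤ M * (cdf0 μ t - cdf0 ν t) :=
            mul_le_mul_of_nonneg_left (key t ht) hM.le
        _ ≤ M * |cdf0 μ t - cdf0 ν t| :=
            mul_le_mul_of_nonneg_left (le_abs_self _) hM.le
  -- measurability, integrability
  have hmeasg : Measurable (fun t => M * |cdf0 μ t - cdf0 ν t|) :=
    (((cdf0_mono μ).measurable.sub (cdf0_mono ν).measurable).abs).const_mul M
  have hboundg : ∀ t, ‖M * |cdf0 μ t - cdf0 ν t|‖ ≤ M := by
    intro t
    have h1 : |cdf0 μ t - cdf0 ν t| ≤ 1 := by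
      rw [abs_sub_le_iff]
      constructor <;>
        [linarith [cdf0_le_one μ t, cdf0_nonneg ν t];
         linarith [cdf0_le_one ν t, cdf0_nonneg μ t]]
    rw [Real.norm_eq_abs, abs_of_nonneg (mul_nonneg hM.le (abs_nonneg _))]
    calc M * |cdf0 μ t - cdf0 ν t| ≤ M * 1 := mul_le_mul_of_nonneg_left h1 hM.le
      _ = M := mul_one M
  have hintIcc : IntegrableOn (fun t => M * |cdf0 μ t - cdf0 ν t|)
      (Set.Icc (0:ℝ) M) volume := by
    haveI : IsFiniteMeasure (volume.restrict (Set.Icc (0:ℝ) M)) :=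
      ⟨by rw [Measure.restrict_apply_univ]; exact measure_Icc_lt_top⟩
    exact Integrable.mono' (integrable_const M)
      hmeasg.aestronglyMeasurable
      (Filter.Eventually.of_forall hboundg)
  have hintIco : IntegrableOn (fun t => M * |cdf0 μ t - cdf0 ν t|)
      (Set.Ico x₁ x₂) volume :=
    hintIcc.mono_set (fun t ht => ⟨le_trans hx₁ ht.1, le_trans ht.2.le hx₂⟩)
  -- integrate the pointwise bound over Ico x₁ x₂
  have h1 : (x₂ - x₁) * (x₁ * (a - b)) ≤
      ∫ t in Set.Ico x₁ x₂, M * |cdf0 μ t - cdf0 ν t| := by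
    have hc : ∫ _t in Set.Ico x₁ x₂, x₁ * (a - b) ∂volume
        = (x₂ - x₁) * (x₁ * (a - b)) := by
      rw [setIntegral_const, Real.volume_real_Ico_of_le h12.le,
        smul_eq_mul]
    rw [← hc]
    exact setIntegral_mono_on ((integrableOn_const_iff).mpr
      (Or.inr (by rw [Real.volume_Ico]; exact ENNReal.ofReal_lt_top)))
      hintIco measurableSet_Ico key2
  have h3 : ∫ t in Set.Ico x₁ x₂, M * |cdf0 μ t - cdf0 ν t| ≤
      ∫ t in Set.Icc (0:ℝ) M, M * |cdf0 μ t - cdf0 ν t| := by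
    apply setIntegral_mono_set hintIcc
    · exact Filter.Eventually.of_forall fun t => mul_nonneg hM.le (abs_nonneg _)
    · exact HasSubset.Subset.eventuallyLE
        (fun t ht => ⟨le_trans hx₁ ht.1, le_trans ht.2.le hx₂⟩)
  have h4 : ∫ t in Set.Icc (0:ℝ) M, M * |cdf0 μ t - cdf0 ν t|
      = M * wassDist M μ ν := by
    rw [wassDist, ← integral_const_mul]
  have hmain : x₁ * (a - b) ≤ M * wassDist M μ ν / (x₂ - x₁) := by
    rw [le_div_iff₀ hd]
    calc x₁ * (a - b) * (x₂ - x₁) = (x₂ - x₁) * (x₁ * (a - b)) := by ring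
      _ ≤ M * wassDist M μ ν := by
          calc (x₂ - x₁) * (x₁ * (a - b)) ≤ _ := h1
            _ ≤ _ := h3
            _ = _ := h4
  have haone : a ≤ 1 := by
    have := prob_le_one (μ := ν) (s := {ξ : ℝ | x₂ ≤ ξ})
    simpa [ha] using ENNReal.toReal_mono ENNReal.one_ne_top this
  have hfinal : rev x₂ ν - rev x₁ μ = (x₂ - x₁) * a + x₁ * (a - b) := by
    simp only [rev, ← ha, ← hb]; ring
  rw [hfinal]
  have : (x₂ - x₁) * a ≤ (x₂ - x₁) * 1 := mul_le_mul_of_nonneg_left haone hd.le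
  linarith

end
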